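/- Let E be an arbitrary set. Every maximal ideal of C^∞(ℝ^E) is C^∞-radical, and the maps I ↦ Î := {Z(f) : f ∈ I} and Φ ↦ Φ̌ := {f ∈ C^∞(ℝ^E) : Z(f) ∈ Φ} restrict to mutually inverse bijections between the set of all maximal filters of zerosets of ℝ^E (maximal elements among proper filters of zerosets ordered by inclusion) and the set of all maximal ideals of C^∞(ℝ^E). -/

import Mathlib

noncomputable section

open Set

/-- The continuous linear "restriction" map `ℝ^t → ℝ^s` for `s ⊆ t`. -/
def restrCLM {E : Type} (s t : Finset E) (h : s ⊆ t) : (↥t → ℝ) →L[ℝ] (↥s → ℝ) :=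
  LinearMap.toContinuousLinearMap
    (LinearMap.funLeft ℝ ℝ (fun i : ↥s => (⟨i.1, h i.2⟩ : ↥t)))

/-- A function `f : ℝ^E → ℝ` is (`C^∞`-)smooth iff it factors through the projection onto
finitely many coordinates via an infinitely differentiable function. -/
def IsCinf {E : Type} (f : (E → ℝ) → ℝ) : Prop :=
  ∃ (s : Finset E) (g : (↥s → ℝ) → ℝ),
    ContDiff ℝ (⊤ : ℕ∞) g ∧ ∀ v : E → ℝ, f v = g (fun i => v i.1)

theorem IsCinf.enlarge {E : Type} {f : (E → ℝ) → ℝ} {s : Finset E} {g : (↥s → ℝ) → ℝ}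
    (hg : ContDiff ℝ (⊤ : ℕ∞) g) (hfg : ∀ v, f v = g (fun i => v i.1))
    (t : Finset E) (hst : s ⊆ t) :
    ∃ g' : (↥t → ℝ) → ℝ, ContDiff ℝ (⊤ : ℕ∞) g' ∧ ∀ v, f v = g' (fun i => v i.1) := by
  refine ⟨g ∘ restrCLM s t hst, hg.comp (restrCLM s t hst).contDiff, fun v => ?_⟩
  have h1 : (restrCLM s t hst) (fun i : ↥t => v i.1) = fun i : ↥s => v i.1 := rfl
  simp only [Function.comp_apply, h1]
  exact hfg v

/-- The ring `C^∞(ℝ^E)` of smooth functions `ℝ^E → ℝ`, as a subring of the ring of all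
functions `ℝ^E → ℝ` with pointwise operations. -/
def Cinf (E : Type) : Subring ((E → ℝ) → ℝ) where
  carrier := {f | IsCinf f}
  zero_mem' := ⟨∅, fun _ => 0, contDiff_const, fun _ => rfl⟩
  one_mem' := ⟨∅, fun _ => 1, contDiff_const, fun _ => rfl⟩
  neg_mem' := by
    rintro f ⟨s, g, hg, hfg⟩
    exact ⟨s, -g, hg.neg, fun v => by simp [hfg v]⟩
  add_mem' := by
    rintro f₁ f₂ ⟨s, g₁, hg₁, hfg₁⟩ ⟨t, g₂, hg₂, hfg₂⟩
    haveI := Classical.decEq E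
    obtain ⟨g₁', hg₁', hfg₁'⟩ := IsCinf.enlarge hg₁ hfg₁ (s ∪ t) Finset.subset_union_left
    obtain ⟨g₂', hg₂', hfg₂'⟩ := IsCinf.enlarge hg₂ hfg₂ (s ∪ t) Finset.subset_union_right
    exact ⟨s ∪ t, g₁' + g₂', hg₁'.add hg₂', fun v => by
      simp only [Pi.add_apply, hfg₁' v, hfg₂' v]⟩
  mul_mem' := by
    rintro f₁ f₂ ⟨s, g₁, hg₁, hfg₁⟩ ⟨t, g₂, hg₂, hfg₂⟩
    haveI := Classical.decEq E
    obtain ⟨g₁', hg₁', hfg₁'⟩ := IsCinf.enlarge hg₁ hfg₁ (s ∪ t) Finset.subset_union_left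
    obtain ⟨g₂', hg₂', hfg₂'⟩ := IsCinf.enlarge hg₂ hfg₂ (s ∪ t) Finset.subset_union_right
    exact ⟨s ∪ t, g₁' * g₂', hg₁'.mul hg₂', fun v => by
      simp only [Pi.mul_apply, hfg₁' v, hfg₂' v]⟩

/-- The zeroset of a smooth function on `ℝ^E`. -/
def Z {E : Type} (f : Cinf E) : Set (E → ℝ) := {v | (f : (E → ℝ) → ℝ) v = 0}

/-- An ideal `I ⊆ C^∞(ℝ^E)` is `C^∞`-radical iff it contains every function whose zeroset
contains the zeroset of some member of `I`. -/
def IsCinfRadical {E : Type} (I : Ideal (Cinf E)) : Prop :=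
  ∀ g : Cinf E, (∃ f ∈ I, Z f ⊆ Z g) → g ∈ I

/-- The collection of zerosets of `ℝ^E`. -/
def zeroSets (E : Type) : Set (Set (E → ℝ)) := {X | ∃ f : Cinf E, X = Z f}

/-- A filter of zerosets of `ℝ^E`. -/
def IsZFilter {E : Type} (Φ : Set (Set (E → ℝ))) : Prop :=
  Φ ⊆ zeroSets E ∧ (Set.univ : Set (E → ℝ)) ∈ Φ ∧
    (∀ F ∈ Φ, ∀ G ∈ Φ, F ∩ G ∈ Φ) ∧
    (∀ F ∈ Φ, ∀ H ∈ zeroSets E, F ⊆ H → H ∈ Φ)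

/-- `Ŝ`: the set of zerosets of members of a set `S ⊆ C^∞(ℝ^E)`. -/
def hatSet {E : Type} (S : Set (Cinf E)) : Set (Set (E → ℝ)) := {X | ∃ f ∈ S, X = Z f}

/-- `Î`: the set of zerosets of members of the ideal `I`. -/
def hatI {E : Type} (I : Ideal (Cinf E)) : Set (Set (E → ℝ)) := hatSet (I : Set (Cinf E))

/-- `Φ̌`: the set of smooth functions whose zeroset belongs to `Φ`. -/
def checkSet {E : Type} (Φ : Set (Set (E → ℝ))) : Set (Cinf E) := {f : Cinf E | Z f ∈ Φ}

end

/-- A maximal filter of zerosets: a proper filter of zerosets that is maximal among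
proper filters of zerosets, ordered by inclusion. -/
def IsMaxZFilter {E : Type} (Φ : Set (Set (E → ℝ))) : Prop :=
  IsZFilter Φ ∧ (∅ : Set (E → ℝ)) ∉ Φ ∧
    ∀ Ψ : Set (Set (E → ℝ)), IsZFilter Ψ → (∅ : Set (E → ℝ)) ∉ Ψ → Φ ⊆ Ψ → Ψ = Φ

section Aux

open Set

variable {E : Type}

lemma restr_surj (s : Finset E) (u : ↥s → ℝ) : ∃ v : E → ℝ, (fun i : ↥s => v i.1) = u := by
  classical
  refine ⟨fun i => if h : i ∈ s then u ⟨i, h⟩ else 0, ?_⟩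
  funext i
  simp [i.2]

lemma mem_Z {f : Cinf E} {v : E → ℝ} : v ∈ Z f ↔ (f : (E → ℝ) → ℝ) v = 0 := Iff.rfl

lemma Z_zero : Z (0 : Cinf E) = univ := by
  ext v; simp [mem_Z]

lemma Z_one : Z (1 : Cinf E) = ∅ := by
  ext v; simp [mem_Z]

lemma Z_mul (f g : Cinf E) : Z (f * g) = Z f ∪ Z g := by
  ext v
  simp only [mem_Z, mem_union]
  push_cast
  simp [mul_eq_zero]

lemma Z_sq_add_sq (f g : Cinf E) : Z (f * f + g * g) = Z f ∩ Z g := by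
  ext v
  simp only [mem_Z, mem_inter_iff]
  push_cast
  constructor
  · intro h
    have h1 := (add_eq_zero_iff_of_nonneg (mul_self_nonneg _) (mul_self_nonneg _)).mp h
    exact ⟨mul_self_eq_zero.mp h1.1, mul_self_eq_zero.mp h1.2⟩
  · rintro ⟨h1, h2⟩; simp [h1, h2]

lemma Z_add_supset (f g : Cinf E) : Z f ∩ Z g ⊆ Z (f + g) := by
  rintro v ⟨h1, h2⟩
  simp only [mem_Z] at *
  push_cast
  simp [h1, h2]

lemma isUnit_of_Z_empty {f : Cinf E} (h : Z f = ∅) : IsUnit f := by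
  have hne : ∀ v, (f : (E → ℝ) → ℝ) v ≠ 0 := by
    intro v hv
    exact absurd (mem_Z.mpr hv) (by simp [h])
  obtain ⟨s, g, hg, hfg⟩ := f.2
  have hgne : ∀ u : ↥s → ℝ, g u ≠ 0 := by
    intro u
    obtain ⟨v, hv⟩ := restr_surj s u
    have := hne v
    rwa [hfg v, hv] at this
  have hinv : IsCinf (fun v => ((f : (E → ℝ) → ℝ) v)⁻¹) :=
    ⟨s, fun u => (g u)⁻¹, hg.inv hgne, fun v => by
      show ((f : (E → ℝ) → ℝ) v)⁻¹ = (g fun i => v i.1)⁻¹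
      rw [hfg v]⟩
  refine IsUnit.of_mul_eq_one (a := f) ⟨_, hinv⟩ ?_
  apply Subtype.ext
  funext v
  push_cast
  exact mul_inv_cancel₀ (hne v)

lemma hatI_isZFilter (I : Ideal (Cinf E)) : IsZFilter (hatI I) := by
  refine ⟨?_, ⟨0, I.zero_mem, Z_zero.symm⟩, ?_, ?_⟩
  · rintro X ⟨f, _, rfl⟩; exact ⟨f, rfl⟩
  · rintro F ⟨f, hf, rfl⟩ G ⟨g, hg, rfl⟩
    exact ⟨f * f + g * g, I.add_mem (I.mul_mem_left f hf) (I.mul_mem_left g hg),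
      (Z_sq_add_sq f g).symm⟩
  · rintro F ⟨f, hf, rfl⟩ H ⟨g, rfl⟩ hFH
    refine ⟨g * f, I.mul_mem_left g hf, ?_⟩
    rw [Z_mul]
    exact (union_eq_self_of_subset_right hFH).symm

lemma empty_not_mem_hatI {I : Ideal (Cinf E)} (hI : I ≠ ⊤) : (∅ : Set (E → ℝ)) ∉ hatI I := by
  rintro ⟨f, hf, hZ⟩
  exact hI (I.eq_top_of_isUnit_mem hf (isUnit_of_Z_empty hZ.symm))

/-- The ideal `Φ̌` associated to a filter of zerosets. -/
def checkIdeal (Φ : Set (Set (E → ℝ))) (hΦ : IsZFilter Φ) : Ideal (Cinf E) where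
  carrier := checkSet Φ
  zero_mem' := by show Z (0 : Cinf E) ∈ Φ; rw [Z_zero]; exact hΦ.2.1
  add_mem' := by
    intro f g hf hg
    exact hΦ.2.2.2 _ (hΦ.2.2.1 _ hf _ hg) _ ⟨f + g, rfl⟩ (Z_add_supset f g)
  smul_mem' := by
    intro c f hf
    refine hΦ.2.2.2 _ hf _ ⟨c * f, rfl⟩ ?_
    rw [smul_eq_mul, Z_mul]
    exact subset_union_right

lemma checkIdeal_ne_top {Φ : Set (Set (E → ℝ))} (hΦ : IsZFilter Φ)
    (hne : (∅ : Set (E → ℝ)) ∉ Φ) : checkIdeal Φ hΦ ≠ ⊤ := by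
  intro h
  have : (1 : Cinf E) ∈ checkIdeal Φ hΦ := h ▸ Submodule.mem_top
  have : Z (1 : Cinf E) ∈ Φ := this
  rw [Z_one] at this
  exact hne this

lemma le_checkIdeal_hatI (I : Ideal (Cinf E)) :
    I ≤ checkIdeal (hatI I) (hatI_isZFilter I) := fun f hf => ⟨f, hf, rfl⟩

end Aux

/-- Every maximal ideal of `C^∞(ℝ^E)` is `C^∞`-radical, and `I ↦ Î`,
`Φ ↦ Φ̌` restrict to mutually inverse bijections between maximal filters of zerosets of
`ℝ^E` and maximal ideals of `C^∞(ℝ^E)`. -/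
theorem statement11 (E : Type) :
    (∀ I : Ideal (Cinf E), I.IsMaximal → IsCinfRadical I) ∧
    (∀ I : Ideal (Cinf E), I.IsMaximal →
      IsMaxZFilter (hatI I) ∧ checkSet (hatI I) = (I : Set (Cinf E))) ∧
    (∀ Φ : Set (Set (E → ℝ)), IsMaxZFilter Φ →
      ∃ J : Ideal (Cinf E), (J : Set (Cinf E)) = checkSet Φ ∧ J.IsMaximal ∧ hatI J = Φ) := by
  have key : ∀ I : Ideal (Cinf E), I.IsMaximal →
      checkIdeal (hatI I) (hatI_isZFilter I) = I := fun I hI =>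
    (hI.eq_of_le (checkIdeal_ne_top _ (empty_not_mem_hatI hI.ne_top))
      (le_checkIdeal_hatI I)).symm
  refine ⟨?_, ?_, ?_⟩
  · rintro I hI g ⟨f, hf, hZ⟩
    have hg : g ∈ checkIdeal (hatI I) (hatI_isZFilter I) :=
      (hatI_isZFilter I).2.2.2 _ ⟨f, hf, rfl⟩ _ ⟨g, rfl⟩ hZ
    rwa [key I hI] at hg
  · intro I hI
    have hcheck : checkSet (hatI I) = (I : Set (Cinf E)) := by
      have h := key I hI
      exact congrArg (fun J : Ideal (Cinf E) => (J : Set (Cinf E))) h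
    refine ⟨⟨hatI_isZFilter I, empty_not_mem_hatI hI.ne_top, ?_⟩, hcheck⟩
    intro Ψ hΨ hΨe hsub
    have hIK : I ≤ checkIdeal Ψ hΨ := fun f hf => hsub ⟨f, hf, rfl⟩
    have hK := (hI.eq_of_le (checkIdeal_ne_top hΨ hΨe) hIK).symm
    apply Set.Subset.antisymm _ hsub
    intro X hX
    obtain ⟨f, rfl⟩ := hΨ.1 hX
    have hf : f ∈ checkIdeal Ψ hΨ := hX
    rw [hK] at hf
    exact ⟨f, hf, rfl⟩
  · intro Φ hΦ
    have hhat : hatI (checkIdeal Φ hΦ.1) = Φ := by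
      apply Set.Subset.antisymm
      · rintro X ⟨f, hf, rfl⟩; exact hf
      · intro X hX
        obtain ⟨f, rfl⟩ := hΦ.1.1 hX
        exact ⟨f, hX, rfl⟩
    refine ⟨checkIdeal Φ hΦ.1, rfl, ?_, hhat⟩
    rw [Ideal.isMaximal_def]
    refine ⟨checkIdeal_ne_top hΦ.1 hΦ.2.1, ?_⟩
    intro b hb
    by_contra hbt
    have h1 : Φ ⊆ hatI b := by
      rw [← hhat]; rintro X ⟨f, hf, rfl⟩; exact ⟨f, hb.le hf, rfl⟩
    have h2 := hΦ.2.2 (hatI b) (hatI_isZFilter b) (empty_not_mem_hatI hbt) h1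
    have h3 : b ≤ checkIdeal Φ hΦ.1 := by
      intro f hf
      have hZf : Z f ∈ hatI b := ⟨f, hf, rfl⟩
      rw [h2] at hZf
      exact hZf
    exact hb.2 h3
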